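/- Let m ∈ ℕ with m ≥ 1, let ε ∈ [-1,1], let k₀ ∈ ℤ, let 𝓗 be any countable set, and let h_i(y) (for i ∈ {1,…,m}, y ∈ ℤ) be arbitrary probability distributions on 𝓗. Consider the online binomial game with m rounds, parameter ε, offset k₀ and hint distributions h_i. If V(s_1, ε)(−k₀) < 1/m² or V(s_1, ε)(−k₀) > 1 − 1/m², then every adversary strategy b achieves bias |E[O_I − O_I⁻]| ≤ 2/m. -/

import Mathlib

noncomputable def binPMF (n : ℕ) (ε : ℝ) (k : ℤ) : ℝ :=
  if ((n : ℤ) + k) % 2 = 0 ∧ -(n : ℤ) ≤ k ∧ k ≤ (n : ℤ) then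
    (n.choose (((n : ℤ) + k) / 2).toNat : ℝ) *
      ((1 + ε) / 2) ^ (((n : ℤ) + k) / 2).toNat *
      ((1 - ε) / 2) ^ (((n : ℤ) - k) / 2).toNat
  else 0

noncomputable def binTail (n : ℕ) (ε : ℝ) (k : ℤ) : ℝ :=
  ∑ t ∈ Finset.Icc k (n : ℤ), binPMF n ε t

def lRound (m i : ℕ) : ℕ := m + 1 - i

def sRound (m i : ℕ) : ℕ := ∑ j ∈ Finset.Icc i m, lRound m j

/-- `Y_r`: the partial sum `k₀ + X_1 + ⋯ + X_r` along a trajectory of coin outcomes. -/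
def partY (m : ℕ) (k0 : ℤ) (x : Fin m → ℤ) (r : ℕ) : ℤ :=
  k0 + ∑ j ∈ Finset.univ.filter (fun j : Fin m => (j : ℕ) < r), x j

/-- Probability of a full trajectory of coins and hints in the online binomial game:
round `i+1` flips `ℓ_{i+1} = m - i` coins (summing to `x i`) and then samples the hint
`h i` from the distribution `hint (i+1) (Y_{i+1})`. -/
noncomputable def trajProb {H : Type} (m : ℕ) (ε : ℝ) (k0 : ℤ) (hint : ℕ → ℤ → H → ℝ)
    (x : Fin m → ℤ) (h : Fin m → H) : ℝ :=
  ∏ i : Fin m,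
    (binPMF (lRound m ((i : ℕ) + 1)) ε (x i) *
      hint ((i : ℕ) + 1) (partY m k0 x ((i : ℕ) + 1)) (h i))

/-- `O_r⁻ = Pr[Y_m ≥ 0 ∣ Y_{r-1} = y]`. -/
noncomputable def roundOminus (m : ℕ) (ε : ℝ) (r : ℕ) (y : ℤ) : ℝ :=
  binTail (sRound m r) ε (-y)

/-- `O_r = Pr[Y_m ≥ 0 ∣ Y_{r-1} = y, H_r = hv]`, computed by Bayes' rule over the value
of the round-`r` coin sum. -/
noncomputable def roundO {H : Type} (m : ℕ) (ε : ℝ) (hint : ℕ → ℤ → H → ℝ)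
    (r : ℕ) (y : ℤ) (hv : H) : ℝ :=
  (∑ z ∈ Finset.Icc (-(lRound m r : ℤ)) (lRound m r : ℤ),
      binPMF (lRound m r) ε z * hint r (y + z) hv * binTail (sRound m (r + 1)) ε (-(y + z))) /
  (∑ z ∈ Finset.Icc (-(lRound m r : ℤ)) (lRound m r : ℤ),
      binPMF (lRound m r) ε z * hint r (y + z) hv)

/-- The first round (as an element of `Fin m`, round `i` corresponding to `(i : ℕ) + 1`)
in which the adversary strategy `b` aborts, or `none` if it never aborts. -/
noncomputable def stopIdx {H : Type} (m : ℕ) (k0 : ℤ) (b : ℕ → ℤ → H → Bool)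
    (x : Fin m → ℤ) (h : Fin m → H) : Option (Fin m) :=
  if hex : (Finset.univ.filter
      (fun i : Fin m => b ((i : ℕ) + 1) (partY m k0 x (i : ℕ)) (h i) = true)).Nonempty
  then some ((Finset.univ.filter
      (fun i : Fin m => b ((i : ℕ) + 1) (partY m k0 x (i : ℕ)) (h i) = true)).min' hex)
  else none

/-- `O_I - O_I⁻` along a trajectory; it is `0` when the adversary never aborts, since
`O_{m+1} = O_{m+1}⁻`. -/
noncomputable def trajGain {H : Type} (m : ℕ) (ε : ℝ) (k0 : ℤ) (hint : ℕ → ℤ → H → ℝ)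
    (b : ℕ → ℤ → H → Bool) (x : Fin m → ℤ) (h : Fin m → H) : ℝ :=
  match stopIdx m k0 b x h with
  | some i =>
      roundO m ε hint ((i : ℕ) + 1) (partY m k0 x (i : ℕ)) (h i) -
        roundOminus m ε ((i : ℕ) + 1) (partY m k0 x (i : ℕ))
  | none => 0

/-- The bias `|E[O_I - O_I⁻]|` achieved by the adversary strategy `b` in the online
binomial game with `m` rounds, coin parameter `ε`, offset `k0` and hint distributions
`hint`. -/
noncomputable def gameBias {H : Type} (m : ℕ) (ε : ℝ) (k0 : ℤ) (hint : ℕ → ℤ → H → ℝ)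
    (b : ℕ → ℤ → H → Bool) : ℝ :=
  |∑' q : (Fin m → ℤ) × (Fin m → H),
      trajProb m ε k0 hint q.1 q.2 * trajGain m ε k0 hint b q.1 q.2|

open Finset
open scoped ENNReal
open scoped Classical

lemma binPMF_nonneg {ε : ℝ} (hε : ε ∈ Set.Icc (-1:ℝ) 1) (n : ℕ) (k : ℤ) :
    0 ≤ binPMF n ε k := by
  obtain ⟨h1, h2⟩ := hε
  unfold binPMF
  split
  · have hp : (0:ℝ) ≤ (1+ε)/2 := by linarith
    have hq : (0:ℝ) ≤ (1-ε)/2 := by linarith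
    positivity
  · exact le_refl 0

lemma binPMF_eq_zero_of_not_mem {ε : ℝ} (n : ℕ) (k : ℤ)
    (h : k ∉ Finset.Icc (-(n:ℤ)) (n:ℤ)) : binPMF n ε k = 0 := by
  unfold binPMF
  rw [if_neg]
  simp only [Finset.mem_Icc, not_and_or] at h
  tauto

lemma binPMF_zero {ε : ℝ} (k : ℤ) : binPMF 0 ε k = if k = 0 then 1 else 0 := by
  unfold binPMF
  split_ifs with h1 h2 h2 <;> first | (exfalso; omega) | skip
  · subst h2; norm_num
  · rfl

lemma binPMF_succ {ε : ℝ} (n : ℕ) (k : ℤ) :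
    binPMF (n+1) ε k = (1+ε)/2 * binPMF n ε (k-1) + (1-ε)/2 * binPMF n ε (k+1) := by
  unfold binPMF
  by_cases hc : (((n:ℤ)+1) + k) % 2 = 0 ∧ -((n:ℤ)+1) ≤ k ∧ k ≤ (n:ℤ)+1
  · obtain ⟨hpar, hlo, hhi⟩ := hc
    rw [if_pos (by push_cast; omega)]
    by_cases hlo' : k = -((n:ℤ)+1)
    · subst hlo'
      rw [if_neg (by omega), if_pos (by omega)]
      have e1 : ((((n:ℤ)+1) + -((n:ℤ)+1)) / 2).toNat = 0 := by omega
      have e2 : ((((n:ℤ)+1) - -((n:ℤ)+1)) / 2).toNat = n+1 := by omega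
      have e3 : (((n:ℤ) + (-((n:ℤ)+1)+1)) / 2).toNat = 0 := by omega
      have e4 : (((n:ℤ) - (-((n:ℤ)+1)+1)) / 2).toNat = n := by omega
      push_cast [e1, e2, e3, e4]
      simp [Nat.choose_zero_right]
      ring
    · by_cases hhi' : k = (n:ℤ)+1
      · subst hhi'
        rw [if_pos (by omega), if_neg (by omega)]
        have e1 : ((((n:ℤ)+1) + ((n:ℤ)+1)) / 2).toNat = n+1 := by omega
        have e2 : ((((n:ℤ)+1) - ((n:ℤ)+1)) / 2).toNat = 0 := by omega
        have e3 : (((n:ℤ) + (((n:ℤ)+1)-1)) / 2).toNat = n := by omega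
        have e4 : (((n:ℤ) - (((n:ℤ)+1)-1)) / 2).toNat = 0 := by omega
        push_cast [e1, e2, e3, e4]
        simp [Nat.choose_self]
        ring
      · -- interior: obtain a ≥ 1 with n+1+k = 2a
        have hex : ∃ a : ℕ, ((n:ℤ)+1) + k = 2 * (a:ℤ) ∧ 1 ≤ a ∧ (a:ℤ) ≤ n := by
          have h2 : (0:ℤ) ≤ (n:ℤ)+1+k := by omega
          refine ⟨((n:ℤ)+1+k).toNat / 2, by omega, by omega, by omega⟩
        obtain ⟨a, ha, ha1, han⟩ := hex
        rw [if_pos (by omega), if_pos (by omega)]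
        have e1 : ((((n:ℤ)+1) + k) / 2).toNat = a := by omega
        have e2 : ((((n:ℤ)+1) - k) / 2).toNat = n+1-a := by omega
        have e3 : (((n:ℤ) + (k-1)) / 2).toNat = a-1 := by omega
        have e4 : (((n:ℤ) - (k-1)) / 2).toNat = n+1-a := by omega
        have e5 : (((n:ℤ) + (k+1)) / 2).toNat = a := by omega
        have e6 : (((n:ℤ) - (k+1)) / 2).toNat = n-a := by omega
        push_cast
        rw [e1, e2, e3, e4, e5, e6]
        obtain ⟨a, rfl⟩ : ∃ a' : ℕ, a = a' + 1 := ⟨a-1, by omega⟩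
        have hch : (n+1).choose (a+1) = n.choose a + n.choose (a+1) := Nat.choose_succ_succ n a
        have hnn : n+1-(a+1) = n - a := by omega
        have hq : ∃ b:ℕ, n - a = b ∧ n - (a+1) = b - 1 ∧ 1 ≤ b ∨ True := ⟨n-a, by omega⟩
        rw [hch, hnn]
        push_cast [Nat.succ_sub_one]
        by_cases hab : a + 1 ≤ n
        · have h7 : n - a = (n - (a+1)) + 1 := by omega
          rw [h7]
          ring
        · -- a = n: choose n (a+1) = 0
          have : a = n := by omega
          subst this
          simp [Nat.choose_succ_self]
          ring
  · rw [if_neg (by push_cast at hc ⊢; omega)]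
    rw [if_neg (by push_cast at hc ⊢; omega), if_neg (by push_cast at hc ⊢; omega)]
    ring

lemma sum_shift_Icc (f : ℤ → ℝ) (a b c : ℤ) :
    ∑ z ∈ Icc a b, f (z + c) = ∑ z ∈ Icc (a+c) (b+c), f z := by
  rw [← map_add_right_Icc a b c, Finset.sum_map]
  rfl

lemma sum_binPMF_trim {ε : ℝ} (n : ℕ) (g : ℤ → ℝ) {T : Finset ℤ}
    (hT : Icc (-(n:ℤ)) (n:ℤ) ⊆ T) :
    ∑ z ∈ T, binPMF n ε z * g z = ∑ z ∈ Icc (-(n:ℤ)) (n:ℤ), binPMF n ε z * g z := by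
  refine (Finset.sum_subset hT ?_).symm
  intro x _ hx
  rw [binPMF_eq_zero_of_not_mem n x hx, zero_mul]

lemma sum_binPMF_eq_one {ε : ℝ} (n : ℕ) :
    ∑ z ∈ Icc (-(n:ℤ)) (n:ℤ), binPMF n ε z = 1 := by
  induction n with
  | zero => simp [binPMF_zero]
  | succ n ih =>
    have trim : ∀ (T : Finset ℤ), Icc (-(n:ℤ)) (n:ℤ) ⊆ T →
        ∑ z ∈ T, binPMF n ε z = 1 := by
      intro T hT
      have := sum_binPMF_trim (ε := ε) n (fun _ => 1) hT
      simpa [ih] using this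
    have e : ∀ z : ℤ, binPMF (n+1) ε z
        = (1+ε)/2 * binPMF n ε (z-1) + (1-ε)/2 * binPMF n ε (z+1) :=
      fun z => binPMF_succ n z
    push_cast
    calc ∑ z ∈ Icc (-((n:ℤ)+1)) ((n:ℤ)+1), binPMF (n+1) ε z
        = (1+ε)/2 * ∑ z ∈ Icc (-((n:ℤ)+1)) ((n:ℤ)+1), binPMF n ε (z-1)
          + (1-ε)/2 * ∑ z ∈ Icc (-((n:ℤ)+1)) ((n:ℤ)+1), binPMF n ε (z+1) := by
          rw [Finset.sum_congr rfl (fun z _ => e z), Finset.sum_add_distrib,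
            ← Finset.mul_sum, ← Finset.mul_sum]
      _ = 1 := by
          have h1 : ∑ z ∈ Icc (-((n:ℤ)+1)) ((n:ℤ)+1), binPMF n ε (z-1)
              = ∑ u ∈ Icc (-((n:ℤ)+1)-1) ((n:ℤ)+1-1), binPMF n ε u := by
            have := sum_shift_Icc (binPMF n ε) (-((n:ℤ)+1)) ((n:ℤ)+1) (-1)
            simpa [sub_eq_add_neg] using this
          have h2 : ∑ z ∈ Icc (-((n:ℤ)+1)) ((n:ℤ)+1), binPMF n ε (z+1)
              = ∑ u ∈ Icc (-((n:ℤ)+1)+1) ((n:ℤ)+1+1), binPMF n ε u := by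
            exact sum_shift_Icc (binPMF n ε) _ _ 1
          rw [h1, h2, trim _ (by intro x hx; simp only [mem_Icc] at *; omega),
            trim _ (by intro x hx; simp only [mem_Icc] at *; omega)]
          ring

lemma binTail_nonneg {ε : ℝ} (hε : ε ∈ Set.Icc (-1:ℝ) 1) (n : ℕ) (k : ℤ) :
    0 ≤ binTail n ε k :=
  Finset.sum_nonneg fun t _ => binPMF_nonneg hε n t

lemma binTail_le_one {ε : ℝ} (hε : ε ∈ Set.Icc (-1:ℝ) 1) (n : ℕ) (k : ℤ) :
    binTail n ε k ≤ 1 := by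
  unfold binTail
  have h1 : ∑ t ∈ Icc k (n:ℤ), binPMF n ε t
      = ∑ t ∈ Icc k (n:ℤ) ∩ Icc (-(n:ℤ)) (n:ℤ), binPMF n ε t := by
    refine (Finset.sum_subset (Finset.inter_subset_left) ?_).symm
    intro x hx hx2
    refine binPMF_eq_zero_of_not_mem n x ?_
    intro hmem
    exact hx2 (Finset.mem_inter.2 ⟨hx, hmem⟩)
  rw [h1, ← sum_binPMF_eq_one (ε := ε) n]
  exact Finset.sum_le_sum_of_subset_of_nonneg (Finset.inter_subset_right)
    (fun t _ _ => binPMF_nonneg hε n t)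

lemma binTail_succ {ε : ℝ} (n : ℕ) (k : ℤ) :
    binTail (n+1) ε k = (1+ε)/2 * binTail n ε (k-1) + (1-ε)/2 * binTail n ε (k+1) := by
  unfold binTail
  push_cast
  rw [Finset.sum_congr rfl (fun t _ => binPMF_succ n t), Finset.sum_add_distrib,
    ← Finset.mul_sum, ← Finset.mul_sum]
  have h1 : ∑ t ∈ Icc k ((n:ℤ)+1), binPMF n ε (t-1)
      = ∑ u ∈ Icc (k-1) (n:ℤ), binPMF n ε u := by
    have := sum_shift_Icc (binPMF n ε) k ((n:ℤ)+1) (-1)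
    simpa [sub_eq_add_neg] using this
  have h2 : ∑ t ∈ Icc k ((n:ℤ)+1), binPMF n ε (t+1)
      = ∑ u ∈ Icc (k+1) (n:ℤ), binPMF n ε u := by
    rw [sum_shift_Icc (binPMF n ε) k ((n:ℤ)+1) 1]
    refine (Finset.sum_subset (Finset.Icc_subset_Icc le_rfl (by omega)) ?_).symm
    intro x hx hx2
    simp only [mem_Icc] at hx hx2
    exact binPMF_eq_zero_of_not_mem n x (by simp only [mem_Icc]; omega)
  rw [h1, h2]

lemma binTail_conv {ε : ℝ} (a b : ℕ) (y : ℤ) :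
    binTail (a+b) ε y = ∑ z ∈ Icc (-(a:ℤ)) (a:ℤ), binPMF a ε z * binTail b ε (y - z) := by
  induction a generalizing y with
  | zero => simp [binPMF_zero]
  | succ a ih =>
    have key : ∀ w : ℤ, ∑ z ∈ Icc (-((a:ℤ)+1)) ((a:ℤ)+1), binPMF (a+1) ε z * binTail b ε (w - z)
        = (1+ε)/2 * ∑ u ∈ Icc (-(a:ℤ)) (a:ℤ), binPMF a ε u * binTail b ε (w-1-u)
        + (1-ε)/2 * ∑ u ∈ Icc (-(a:ℤ)) (a:ℤ), binPMF a ε u * binTail b ε (w+1-u) := by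
      intro w
      have step1 : ∑ z ∈ Icc (-((a:ℤ)+1)) ((a:ℤ)+1), binPMF (a+1) ε z * binTail b ε (w - z)
          = ∑ z ∈ Icc (-((a:ℤ)+1)) ((a:ℤ)+1), ((1+ε)/2 * (binPMF a ε (z-1) * binTail b ε (w-z))
            + (1-ε)/2 * (binPMF a ε (z+1) * binTail b ε (w-z))) :=
        Finset.sum_congr rfl fun z _ => by rw [binPMF_succ]; ring
      rw [step1, Finset.sum_add_distrib, ← Finset.mul_sum, ← Finset.mul_sum]
      congr 1
      · congr 1
        have e1 : ∑ z ∈ Icc (-((a:ℤ)+1)) ((a:ℤ)+1), binPMF a ε (z-1) * binTail b ε (w-z)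
            = ∑ z ∈ Icc (-((a:ℤ)+1)) ((a:ℤ)+1),
              (fun u => binPMF a ε u * binTail b ε (w-1-u)) (z + (-1)) := by
          refine Finset.sum_congr rfl fun z _ => ?_
          simp only []
          rw [show z + (-1) = z - 1 from by ring, show w - 1 - (z-1) = w - z from by ring]
        refine e1.trans ((sum_shift_Icc (fun u => binPMF a ε u * binTail b ε (w-1-u))
          (-((a:ℤ)+1)) ((a:ℤ)+1) (-1)).trans ?_)
        exact sum_binPMF_trim a _ (by intro x hx; simp only [mem_Icc] at *; omega)
      · congr 1
        have e2 : ∑ z ∈ Icc (-((a:ℤ)+1)) ((a:ℤ)+1), binPMF a ε (z+1) * binTail b ε (w-z)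
            = ∑ z ∈ Icc (-((a:ℤ)+1)) ((a:ℤ)+1),
              (fun u => binPMF a ε u * binTail b ε (w+1-u)) (z + 1) := by
          refine Finset.sum_congr rfl fun z _ => ?_
          simp only []
          rw [show w + 1 - (z+1) = w - z from by ring]
        refine e2.trans ((sum_shift_Icc (fun u => binPMF a ε u * binTail b ε (w+1-u))
          (-((a:ℤ)+1)) ((a:ℤ)+1) 1).trans ?_)
        exact sum_binPMF_trim a _ (by intro x hx; simp only [mem_Icc] at *; omega)
    have lhs : binTail (a+1+b) ε y
        = (1+ε)/2 * binTail (a+b) ε (y-1) + (1-ε)/2 * binTail (a+b) ε (y+1) := by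
      rw [show a+1+b = (a+b)+1 from by omega, binTail_succ]
    rw [lhs, ih (y-1), ih (y+1)]
    push_cast
    exact (key y).symm

section prefixes
variable {H : Type}

/-- partial sums on a length-`r` prefix -/
def Ypre (k0 : ℤ) {r : ℕ} (x : Fin r → ℤ) (j : ℕ) : ℤ :=
  k0 + ∑ i ∈ Finset.univ.filter (fun i : Fin r => (i : ℕ) < j), x i

noncomputable def ePP (m : ℕ) (ε : ℝ) (k0 : ℤ) (hint : ℕ → ℤ → H → ℝ) {r : ℕ}
    (x : Fin r → ℤ) (h : Fin r → H) : ℝ≥0∞ :=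
  ∏ i : Fin r, (ENNReal.ofReal (binPMF (lRound m ((i : ℕ) + 1)) ε (x i))
    * ENNReal.ofReal (hint ((i : ℕ) + 1) (Ypre k0 x ((i : ℕ) + 1)) (h i)))

def BadP (k0 : ℤ) (u : ℕ → ℤ → ℝ) (uh : ℕ → ℤ → H → ℝ) (lam : ℝ) {r : ℕ}
    (x : Fin r → ℤ) (h : Fin r → H) : Prop :=
  ∃ j : Fin r, lam ≤ u ((j : ℕ) + 1) (Ypre k0 x (j : ℕ)) ∨
    lam ≤ uh ((j : ℕ) + 1) (Ypre k0 x (j : ℕ)) (h j)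

lemma Ypre_snoc_le (k0 : ℤ) {r : ℕ} (x : Fin r → ℤ) (z : ℤ) {j : ℕ} (hj : j ≤ r) :
    Ypre k0 (Fin.snoc x z) j = Ypre k0 x j := by
  unfold Ypre
  congr 1
  rw [Finset.sum_filter, Finset.sum_filter, Fin.sum_univ_castSucc]
  simp only [Fin.coe_castSucc, Fin.snoc_castSucc, Fin.val_last, Fin.snoc_last]
  rw [if_neg (by omega), add_zero]

lemma Ypre_self (k0 : ℤ) {r : ℕ} (x : Fin r → ℤ) :
    Ypre k0 x r = k0 + ∑ i, x i := by
  unfold Ypre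
  congr 1
  rw [Finset.filter_true_of_mem (fun i _ => i.isLt)]

lemma Ypre_snoc_top (k0 : ℤ) {r : ℕ} (x : Fin r → ℤ) (z : ℤ) :
    Ypre k0 (Fin.snoc x z) (r + 1) = Ypre k0 x r + z := by
  rw [Ypre_self k0 (Fin.snoc x z), Ypre_self k0 x, Fin.sum_univ_castSucc]
  simp only [Fin.snoc_castSucc, Fin.snoc_last]
  ring

lemma ePP_snoc (m : ℕ) (ε : ℝ) (k0 : ℤ) (hint : ℕ → ℤ → H → ℝ) {r : ℕ}
    (x : Fin r → ℤ) (h : Fin r → H) (z : ℤ) (hv : H) :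
    ePP m ε k0 hint (Fin.snoc x z) (Fin.snoc h hv)
      = ePP m ε k0 hint x h * (ENNReal.ofReal (binPMF (lRound m (r + 1)) ε z)
        * ENNReal.ofReal (hint (r + 1) (Ypre k0 x r + z) hv)) := by
  unfold ePP
  rw [Fin.prod_univ_castSucc]
  congr 1
  · refine Finset.prod_congr rfl fun i _ => ?_
    simp only [Fin.coe_castSucc, Fin.snoc_castSucc]
    rw [Ypre_snoc_le k0 x z (by omega)]
  · simp only [Fin.val_last, Fin.snoc_last]
    rw [Ypre_snoc_top k0 x z]

lemma BadP_snoc (k0 : ℤ) (u : ℕ → ℤ → ℝ) (uh : ℕ → ℤ → H → ℝ) (lam : ℝ) {r : ℕ}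
    (x : Fin r → ℤ) (h : Fin r → H) (z : ℤ) (hv : H) :
    BadP k0 u uh lam (Fin.snoc x z) (Fin.snoc h hv)
      ↔ BadP k0 u uh lam x h ∨
        (lam ≤ u (r + 1) (Ypre k0 x r) ∨ lam ≤ uh (r + 1) (Ypre k0 x r) hv) := by
  unfold BadP
  constructor
  · rintro ⟨j, hj⟩
    induction j using Fin.lastCases with
    | last =>
      right
      simpa only [Fin.val_last, Fin.snoc_last, Ypre_snoc_le k0 x z (le_refl r)] using hj
    | cast j =>
      left
      refine ⟨j, ?_⟩
      simpa only [Fin.coe_castSucc, Fin.snoc_castSucc,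
        Ypre_snoc_le k0 x z (le_of_lt j.isLt)] using hj
  · rintro (⟨j, hj⟩ | hj)
    · refine ⟨j.castSucc, ?_⟩
      simpa only [Fin.coe_castSucc, Fin.snoc_castSucc,
        Ypre_snoc_le k0 x z (le_of_lt j.isLt)] using hj
    · refine ⟨Fin.last r, ?_⟩
      simpa only [Fin.val_last, Fin.snoc_last, Ypre_snoc_le k0 x z (le_refl r)] using hj

lemma tsum_snoc {α : Type*} {r : ℕ} (F : (Fin (r+1) → α) → ℝ≥0∞) :
    ∑' f : Fin (r+1) → α, F f = ∑' (g : Fin r → α) (z : α), F (Fin.snoc g z) := by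
  rw [← (Fin.insertNthEquiv (fun _ => α) (Fin.last r)).tsum_eq F,
    show (fun c : α × (Fin r → α) => F ((Fin.insertNthEquiv (fun _ => α) (Fin.last r)) c))
      = fun c : α × (Fin r → α) => F (Fin.snoc c.2 c.1) from ?_,
    ENNReal.tsum_prod (f := fun z (g : Fin r → α) => F (Fin.snoc g z)), ENNReal.tsum_comm]
  ext c
  congr 1
  simp [Fin.insertNthEquiv, Fin.insertNth_last]

/-- peel the last round off a double tsum over prefix trajectories -/
lemma tsum_pair_snoc {r : ℕ} (F : (Fin (r+1) → ℤ) → (Fin (r+1) → H) → ℝ≥0∞) :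
    ∑' xh : (Fin (r+1) → ℤ) × (Fin (r+1) → H), F xh.1 xh.2
      = ∑' xh : (Fin r → ℤ) × (Fin r → H), ∑' (z : ℤ) (hv : H),
          F (Fin.snoc xh.1 z) (Fin.snoc xh.2 hv) := by
  rw [ENNReal.tsum_prod (f := fun x h => F x h),
    tsum_snoc (fun x => ∑' h : Fin (r+1) → H, F x h)]
  rw [ENNReal.tsum_prod (f := fun (x : Fin r → ℤ) (h : Fin r → H) => ∑' (z : ℤ) (hv : H),
    F (Fin.snoc x z) (Fin.snoc h hv))]
  congr 1
  ext g
  calc ∑' (z : ℤ) (h : Fin (r+1) → H), F (Fin.snoc g z) h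
      = ∑' (z : ℤ) (b : Fin r → H) (hv : H), F (Fin.snoc g z) (Fin.snoc b hv) :=
        tsum_congr fun z => tsum_snoc (fun h => F (Fin.snoc g z) h)
    _ = ∑' (b : Fin r → H) (z : ℤ) (hv : H), F (Fin.snoc g z) (Fin.snoc b hv) :=
        ENNReal.tsum_comm (f := fun (z : ℤ) (b : Fin r → H) =>
          ∑' hv : H, F (Fin.snoc g z) (Fin.snoc b hv))

end prefixes

open scoped Classical

section core
variable {H : Type} (m : ℕ) (ε : ℝ) (k0 : ℤ) (hint : ℕ → ℤ → H → ℝ)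

noncomputable def Dfun (rr : ℕ) (y : ℤ) (hv : H) : ℝ :=
  ∑ z ∈ Icc (-(lRound m rr : ℤ)) (lRound m rr : ℤ),
    binPMF (lRound m rr) ε z * hint rr (y + z) hv

lemma hint_summable (hsum : ∀ r y, ∑' hv : H, hint r y hv = 1) (rr : ℕ) (w : ℤ) :
    Summable (hint rr w) := by
  by_contra hcon
  exact one_ne_zero (by rw [← hsum rr w, tsum_eq_zero_of_not_summable hcon])

lemma tsum_ofReal_hint (hno : ∀ r y hv, 0 ≤ hint r y hv)
    (hsum : ∀ r y, ∑' hv : H, hint r y hv = 1) (rr : ℕ) (w : ℤ) :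
    ∑' hv : H, ENNReal.ofReal (hint rr w hv) = 1 := by
  rw [← ENNReal.ofReal_tsum_of_nonneg (hno rr w) (hint_summable hint hsum rr w), hsum rr w,
    ENNReal.ofReal_one]

lemma tsum_ofReal_binPMF_mul (n : ℕ) (g : ℤ → ℝ≥0∞) :
    ∑' z : ℤ, ENNReal.ofReal (binPMF n ε z) * g z
      = ∑ z ∈ Icc (-(n:ℤ)) (n:ℤ), ENNReal.ofReal (binPMF n ε z) * g z :=
  tsum_eq_sum fun z hz => by
    rw [binPMF_eq_zero_of_not_mem n z hz, ENNReal.ofReal_zero, zero_mul]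

lemma step_mass (hε : ε ∈ Set.Icc (-1:ℝ) 1) (hno : ∀ r y hv, 0 ≤ hint r y hv)
    (hsum : ∀ r y, ∑' hv : H, hint r y hv = 1) (rr : ℕ) (y : ℤ) :
    ∑' (z : ℤ) (hv : H), ENNReal.ofReal (binPMF (lRound m rr) ε z)
      * ENNReal.ofReal (hint rr (y + z) hv) = 1 := by
  have h1 : ∀ z : ℤ, ∑' hv : H, ENNReal.ofReal (binPMF (lRound m rr) ε z)
      * ENNReal.ofReal (hint rr (y + z) hv) = ENNReal.ofReal (binPMF (lRound m rr) ε z) := by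
    intro z
    rw [ENNReal.tsum_mul_left, tsum_ofReal_hint hint hno hsum rr (y+z), mul_one]
  rw [tsum_congr h1]
  have h2 := tsum_ofReal_binPMF_mul (ε := ε) (lRound m rr) (fun _ => 1)
  simp only [mul_one] at h2
  rw [h2, ← ENNReal.ofReal_sum_of_nonneg (fun z _ => binPMF_nonneg hε (lRound m rr) z),
    sum_binPMF_eq_one, ENNReal.ofReal_one]

lemma Dfun_nonneg (hε : ε ∈ Set.Icc (-1:ℝ) 1) (hno : ∀ r y hv, 0 ≤ hint r y hv)
    (rr : ℕ) (y : ℤ) (hv : H) : 0 ≤ Dfun m ε hint rr y hv :=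
  Finset.sum_nonneg fun z _ => mul_nonneg (binPMF_nonneg hε _ z) (hno rr (y+z) hv)

lemma Dfun_summable (hsum : ∀ r y, ∑' hv : H, hint r y hv = 1) (rr : ℕ) (y : ℤ) :
    Summable (fun hv => Dfun m ε hint rr y hv) :=
  summable_sum fun z _ => (hint_summable hint hsum rr (y+z)).mul_left _

lemma tsum_Dfun (hsum : ∀ r y, ∑' hv : H, hint r y hv = 1) (rr : ℕ) (y : ℤ) :
    ∑' hv : H, Dfun m ε hint rr y hv = 1 := by
  unfold Dfun
  rw [Summable.tsum_finsetSum fun z _ => (hint_summable hint hsum rr (y+z)).mul_left _]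
  have : ∀ z ∈ Icc (-(lRound m rr : ℤ)) (lRound m rr : ℤ),
      ∑' hv : H, binPMF (lRound m rr) ε z * hint rr (y + z) hv
        = binPMF (lRound m rr) ε z := by
    intro z _
    rw [tsum_mul_left, hsum rr (y+z), mul_one]
  rw [Finset.sum_congr rfl this, sum_binPMF_eq_one]

lemma tsum_ofReal_step (hε : ε ∈ Set.Icc (-1:ℝ) 1) (hno : ∀ r y hv, 0 ≤ hint r y hv)
    (rr : ℕ) (y : ℤ) (hv : H) :
    ∑' z : ℤ, ENNReal.ofReal (binPMF (lRound m rr) ε z)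
      * ENNReal.ofReal (hint rr (y + z) hv) = ENNReal.ofReal (Dfun m ε hint rr y hv) := by
  rw [tsum_ofReal_binPMF_mul]
  unfold Dfun
  rw [ENNReal.ofReal_sum_of_nonneg fun z _ =>
    mul_nonneg (binPMF_nonneg hε _ z) (hno rr (y+z) hv)]
  exact Finset.sum_congr rfl fun z _ => (ENNReal.ofReal_mul (binPMF_nonneg hε _ z)).symm

lemma tsum_ofReal_step_u (hε : ε ∈ Set.Icc (-1:ℝ) 1) (hno : ∀ r y hv, 0 ≤ hint r y hv)
    (u : ℕ → ℤ → ℝ) (hu0 : ∀ r y, 0 ≤ u r y) (rr : ℕ) (y : ℤ) (hv : H) :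
    ∑' z : ℤ, ENNReal.ofReal (binPMF (lRound m rr) ε z)
      * ENNReal.ofReal (hint rr (y + z) hv) * ENNReal.ofReal (u (rr+1) (y+z))
      = ENNReal.ofReal (∑ z ∈ Icc (-(lRound m rr : ℤ)) (lRound m rr : ℤ),
          binPMF (lRound m rr) ε z * hint rr (y + z) hv * u (rr+1) (y+z)) := by
  have := tsum_ofReal_binPMF_mul (ε := ε) (lRound m rr)
    (fun z => ENNReal.ofReal (hint rr (y + z) hv) * ENNReal.ofReal (u (rr+1) (y+z)))
  simp only [← mul_assoc] at this
  rw [this, ENNReal.ofReal_sum_of_nonneg fun z _ => mul_nonneg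
    (mul_nonneg (binPMF_nonneg hε _ z) (hno rr (y+z) hv)) (hu0 (rr+1) (y+z))]
  refine Finset.sum_congr rfl fun z _ => ?_
  rw [ENNReal.ofReal_mul (mul_nonneg (binPMF_nonneg hε _ z) (hno rr (y+z) hv)),
    ENNReal.ofReal_mul (binPMF_nonneg hε _ z)]
end core

section doob
variable {H : Type} (m : ℕ) (ε : ℝ) (k0 : ℤ) (hint : ℕ → ℤ → H → ℝ)

lemma tsum_unique0 (f : ((Fin 0 → ℤ) × (Fin 0 → H)) → ℝ≥0∞) :
    ∑' q, f q = f default :=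
  tsum_eq_single default fun b hb => absurd (Subsingleton.elim b default) hb

lemma ePP_zero : ePP m ε k0 hint (default : Fin 0 → ℤ) (default : Fin 0 → H) = 1 := by
  simp [ePP]

lemma mass (hε : ε ∈ Set.Icc (-1:ℝ) 1) (hno : ∀ r y hv, 0 ≤ hint r y hv)
    (hsum : ∀ r y, ∑' hv : H, hint r y hv = 1) (r : ℕ) :
    ∑' xh : (Fin r → ℤ) × (Fin r → H), ePP m ε k0 hint xh.1 xh.2 = 1 := by
  induction r with
  | zero => rw [tsum_unique0]; exact ePP_zero m ε k0 hint
  | succ r ih =>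
    rw [tsum_pair_snoc (fun x h => ePP m ε k0 hint x h)]
    have key : ∀ xh : (Fin r → ℤ) × (Fin r → H),
        ∑' (z : ℤ) (hv : H), ePP m ε k0 hint (Fin.snoc xh.1 z) (Fin.snoc xh.2 hv)
          = ePP m ε k0 hint xh.1 xh.2 := by
      intro xh
      have h1 : ∀ z hv, ePP m ε k0 hint (Fin.snoc xh.1 z) (Fin.snoc xh.2 hv)
          = ePP m ε k0 hint xh.1 xh.2
            * (ENNReal.ofReal (binPMF (lRound m (r + 1)) ε z)
              * ENNReal.ofReal (hint (r + 1) (Ypre k0 xh.1 r + z) hv)) :=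
        fun z hv => ePP_snoc m ε k0 hint xh.1 xh.2 z hv
      calc ∑' (z : ℤ) (hv : H), ePP m ε k0 hint (Fin.snoc xh.1 z) (Fin.snoc xh.2 hv)
          = ∑' (z : ℤ) (hv : H), ePP m ε k0 hint xh.1 xh.2
            * (ENNReal.ofReal (binPMF (lRound m (r + 1)) ε z)
              * ENNReal.ofReal (hint (r + 1) (Ypre k0 xh.1 r + z) hv)) := by
            exact tsum_congr fun z => tsum_congr fun hv => h1 z hv
        _ = ∑' (z : ℤ), ePP m ε k0 hint xh.1 xh.2
            * ∑' (hv : H), (ENNReal.ofReal (binPMF (lRound m (r + 1)) ε z)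
              * ENNReal.ofReal (hint (r + 1) (Ypre k0 xh.1 r + z) hv)) :=
            tsum_congr fun z => ENNReal.tsum_mul_left
        _ = ePP m ε k0 hint xh.1 xh.2 * ∑' (z : ℤ) (hv : H),
            (ENNReal.ofReal (binPMF (lRound m (r + 1)) ε z)
              * ENNReal.ofReal (hint (r + 1) (Ypre k0 xh.1 r + z) hv)) :=
            ENNReal.tsum_mul_left
        _ = ePP m ε k0 hint xh.1 xh.2 := by
            rw [step_mass m ε hint hε hno hsum (r+1) (Ypre k0 xh.1 r), mul_one]
    rw [tsum_congr key, ih]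

lemma doob (hε : ε ∈ Set.Icc (-1:ℝ) 1) (hno : ∀ r y hv, 0 ≤ hint r y hv)
    (hsum : ∀ r y, ∑' hv : H, hint r y hv = 1)
    (u : ℕ → ℤ → ℝ) (uh : ℕ → ℤ → H → ℝ)
    (hu0 : ∀ r y, 0 ≤ u r y) (huh0 : ∀ r y hv, 0 ≤ uh r y hv)
    (hDuh : ∀ rr y, Summable (fun hv => Dfun m ε hint rr y hv * uh rr y hv))
    (h2 : ∀ rr, 1 ≤ rr → rr ≤ m → ∀ y,
      ∑' hv : H, Dfun m ε hint rr y hv * uh rr y hv = u rr y)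
    (h3 : ∀ rr, 1 ≤ rr → rr ≤ m → ∀ y hv,
      ∑ z ∈ Icc (-(lRound m rr : ℤ)) (lRound m rr : ℤ),
        binPMF (lRound m rr) ε z * hint rr (y + z) hv * u (rr+1) (y+z)
        = Dfun m ε hint rr y hv * uh rr y hv)
    (lam : ℝ) (r : ℕ) (hr : r ≤ m) :
    ENNReal.ofReal lam * (∑' xh : (Fin r → ℤ) × (Fin r → H),
        if BadP k0 u uh lam xh.1 xh.2 then ePP m ε k0 hint xh.1 xh.2 else 0)
      + (∑' xh : (Fin r → ℤ) × (Fin r → H),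
          if BadP k0 u uh lam xh.1 xh.2 then 0
          else ePP m ε k0 hint xh.1 xh.2 * ENNReal.ofReal (u (r+1) (Ypre k0 xh.1 r)))
      ≤ ENNReal.ofReal (u 1 k0) := by
  induction r with
  | zero =>
    rw [tsum_unique0, tsum_unique0]
    have hbad : ∀ (a : Fin 0 → ℤ) (b : Fin 0 → H), ¬ BadP k0 u uh lam a b := by
      rintro a b ⟨j, -⟩; exact j.elim0
    rw [if_neg (hbad _ _), if_neg (hbad _ _), mul_zero, zero_add]
    have hY : Ypre k0 ((default : (Fin 0 → ℤ) × (Fin 0 → H)).1) 0 = k0 := by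
      rw [Ypre_self]; simp
    rw [hY]
    have he : ePP m ε k0 hint ((default : (Fin 0 → ℤ) × (Fin 0 → H)).1)
        ((default : (Fin 0 → ℤ) × (Fin 0 → H)).2) = 1 := by simp [ePP]
    rw [he, one_mul]
  | succ r ih =>
    have hrm : r ≤ m := by omega
    refine le_trans ?_ (ih hrm)
    rw [tsum_pair_snoc (fun x h => if BadP k0 u uh lam x h then ePP m ε k0 hint x h else 0),
      tsum_pair_snoc (fun x h => if BadP k0 u uh lam x h then 0
        else ePP m ε k0 hint x h * ENNReal.ofReal (u (r+1+1) (Ypre k0 x (r+1))))]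
    rw [← ENNReal.tsum_mul_left, ← ENNReal.tsum_add, ← ENNReal.tsum_mul_left,
      ← ENNReal.tsum_add]
    refine ENNReal.tsum_le_tsum fun xh => ?_
    set y := Ypre k0 xh.1 r with hy
    set P := ePP m ε k0 hint xh.1 xh.2 with hP
    have hBsn : ∀ (z : ℤ) (hv : H),
        BadP k0 u uh lam (Fin.snoc xh.1 z) (Fin.snoc xh.2 hv)
          ↔ (BadP k0 u uh lam xh.1 xh.2 ∨ (lam ≤ u (r + 1) y ∨ lam ≤ uh (r + 1) y hv)) :=
      fun z hv => BadP_snoc k0 u uh lam xh.1 xh.2 z hv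
    have hesn : ∀ (z : ℤ) (hv : H),
        ePP m ε k0 hint (Fin.snoc xh.1 z) (Fin.snoc xh.2 hv)
          = P * (ENNReal.ofReal (binPMF (lRound m (r+1)) ε z)
            * ENNReal.ofReal (hint (r + 1) (y + z) hv)) :=
      fun z hv => ePP_snoc m ε k0 hint xh.1 xh.2 z hv
    have hYsn : ∀ z : ℤ, Ypre k0 (Fin.snoc xh.1 z) (r+1) = y + z :=
      fun z => Ypre_snoc_top k0 xh.1 z
    have hmassP : ∑' (z : ℤ) (hv : H),
        P * (ENNReal.ofReal (binPMF (lRound m (r+1)) ε z)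
          * ENNReal.ofReal (hint (r + 1) (y + z) hv)) = P := by
      calc ∑' (z : ℤ) (hv : H), P * (ENNReal.ofReal (binPMF (lRound m (r+1)) ε z)
            * ENNReal.ofReal (hint (r + 1) (y + z) hv))
          = ∑' (z : ℤ), P * ∑' (hv : H), (ENNReal.ofReal (binPMF (lRound m (r+1)) ε z)
            * ENNReal.ofReal (hint (r + 1) (y + z) hv)) :=
            tsum_congr fun z => ENNReal.tsum_mul_left
        _ = P * ∑' (z : ℤ) (hv : H), (ENNReal.ofReal (binPMF (lRound m (r+1)) ε z)
            * ENNReal.ofReal (hint (r + 1) (y + z) hv)) := ENNReal.tsum_mul_left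
        _ = P := by rw [step_mass m ε hint hε hno hsum (r+1) y, mul_one]
    by_cases hB : BadP k0 u uh lam xh.1 xh.2
    · have e1 : ∑' (z : ℤ) (hv : H),
          (if BadP k0 u uh lam (Fin.snoc xh.1 z) (Fin.snoc xh.2 hv)
            then ePP m ε k0 hint (Fin.snoc xh.1 z) (Fin.snoc xh.2 hv) else 0) = P := by
        have hterm : ∀ (z : ℤ) (hv : H),
            (if BadP k0 u uh lam (Fin.snoc xh.1 z) (Fin.snoc xh.2 hv)
              then ePP m ε k0 hint (Fin.snoc xh.1 z) (Fin.snoc xh.2 hv) else 0)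
            = P * (ENNReal.ofReal (binPMF (lRound m (r+1)) ε z)
                * ENNReal.ofReal (hint (r + 1) (y + z) hv)) := fun z hv => by
          rw [if_pos ((hBsn z hv).2 (Or.inl hB)), hesn z hv]
        rw [tsum_congr fun z => tsum_congr fun hv => hterm z hv]
        exact hmassP
      have e2 : ∑' (z : ℤ) (hv : H),
          (if BadP k0 u uh lam (Fin.snoc xh.1 z) (Fin.snoc xh.2 hv) then 0
            else ePP m ε k0 hint (Fin.snoc xh.1 z) (Fin.snoc xh.2 hv)
              * ENNReal.ofReal (u (r+1+1) (Ypre k0 (Fin.snoc xh.1 z) (r+1)))) = 0 := by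
        rw [tsum_congr fun z => tsum_congr fun hv =>
          if_pos ((hBsn z hv).2 (Or.inl hB))]
        simp
      rw [e1, e2, if_pos hB, if_pos hB]
    · by_cases hb1 : lam ≤ u (r+1) y
      · have e1 : ∑' (z : ℤ) (hv : H),
            (if BadP k0 u uh lam (Fin.snoc xh.1 z) (Fin.snoc xh.2 hv)
              then ePP m ε k0 hint (Fin.snoc xh.1 z) (Fin.snoc xh.2 hv) else 0) = P := by
          have hterm : ∀ (z : ℤ) (hv : H),
              (if BadP k0 u uh lam (Fin.snoc xh.1 z) (Fin.snoc xh.2 hv)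
                then ePP m ε k0 hint (Fin.snoc xh.1 z) (Fin.snoc xh.2 hv) else 0)
              = P * (ENNReal.ofReal (binPMF (lRound m (r+1)) ε z)
                  * ENNReal.ofReal (hint (r + 1) (y + z) hv)) := fun z hv => by
            rw [if_pos ((hBsn z hv).2 (Or.inr (Or.inl hb1))), hesn z hv]
          rw [tsum_congr fun z => tsum_congr fun hv => hterm z hv]
          exact hmassP
        have e2 : ∑' (z : ℤ) (hv : H),
            (if BadP k0 u uh lam (Fin.snoc xh.1 z) (Fin.snoc xh.2 hv) then 0
              else ePP m ε k0 hint (Fin.snoc xh.1 z) (Fin.snoc xh.2 hv)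
                * ENNReal.ofReal (u (r+1+1) (Ypre k0 (Fin.snoc xh.1 z) (r+1)))) = 0 := by
          rw [tsum_congr fun z => tsum_congr fun hv =>
            if_pos ((hBsn z hv).2 (Or.inr (Or.inl hb1)))]
          simp
        rw [e1, e2, if_neg hB, if_neg hB, add_zero, mul_zero, zero_add, mul_comm]
        exact mul_le_mul_right (ENNReal.ofReal_le_ofReal hb1) P
      · -- alive, u below the bar: split on the hint
        have hBsn' : ∀ (z : ℤ) (hv : H),
            BadP k0 u uh lam (Fin.snoc xh.1 z) (Fin.snoc xh.2 hv)
              ↔ lam ≤ uh (r + 1) y hv := fun z hv => by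
          rw [hBsn z hv]; tauto
        have e1 : ∑' (z : ℤ) (hv : H),
            (if BadP k0 u uh lam (Fin.snoc xh.1 z) (Fin.snoc xh.2 hv)
              then ePP m ε k0 hint (Fin.snoc xh.1 z) (Fin.snoc xh.2 hv) else 0)
            = ∑' hv : H, (if lam ≤ uh (r + 1) y hv
                then P * ENNReal.ofReal (Dfun m ε hint (r+1) y hv) else 0) := by
          rw [ENNReal.tsum_comm]
          refine tsum_congr fun hv => ?_
          by_cases hbb : lam ≤ uh (r + 1) y hv
          · rw [if_pos hbb]
            have hterm : ∀ z : ℤ,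
                (if BadP k0 u uh lam (Fin.snoc xh.1 z) (Fin.snoc xh.2 hv)
                  then ePP m ε k0 hint (Fin.snoc xh.1 z) (Fin.snoc xh.2 hv) else 0)
                = P * (ENNReal.ofReal (binPMF (lRound m (r+1)) ε z)
                    * ENNReal.ofReal (hint (r + 1) (y + z) hv)) := fun z => by
              rw [if_pos ((hBsn' z hv).2 hbb), hesn z hv]
            rw [tsum_congr hterm, ENNReal.tsum_mul_left,
              tsum_ofReal_step m ε hint hε hno (r+1) y hv]
          · rw [if_neg hbb, tsum_congr fun z => if_neg ((hBsn' z hv).not.2 ?_), tsum_zero]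
            · exact fun hcon => hbb hcon
        have e2 : ∑' (z : ℤ) (hv : H),
            (if BadP k0 u uh lam (Fin.snoc xh.1 z) (Fin.snoc xh.2 hv) then 0
              else ePP m ε k0 hint (Fin.snoc xh.1 z) (Fin.snoc xh.2 hv)
                * ENNReal.ofReal (u (r+1+1) (Ypre k0 (Fin.snoc xh.1 z) (r+1))))
            = ∑' hv : H, (if lam ≤ uh (r + 1) y hv then 0
                else P * ENNReal.ofReal (Dfun m ε hint (r+1) y hv * uh (r+1) y hv)) := by
          rw [ENNReal.tsum_comm]
          refine tsum_congr fun hv => ?_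
          by_cases hbb : lam ≤ uh (r + 1) y hv
          · rw [if_pos hbb, tsum_congr fun z => if_pos ((hBsn' z hv).2 hbb), tsum_zero]
          · rw [if_neg hbb]
            have hterm : ∀ z : ℤ,
                (if BadP k0 u uh lam (Fin.snoc xh.1 z) (Fin.snoc xh.2 hv) then 0
                  else ePP m ε k0 hint (Fin.snoc xh.1 z) (Fin.snoc xh.2 hv)
                    * ENNReal.ofReal (u (r+1+1) (Ypre k0 (Fin.snoc xh.1 z) (r+1))))
                = P * (ENNReal.ofReal (binPMF (lRound m (r+1)) ε z)
                    * ENNReal.ofReal (hint (r + 1) (y + z) hv)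
                    * ENNReal.ofReal (u (r+1+1) (y + z))) := fun z => by
              rw [if_neg ((hBsn' z hv).not.2 (fun hcon => hbb hcon)), hesn z hv, hYsn z]
              ring
            rw [tsum_congr hterm, ENNReal.tsum_mul_left,
              tsum_ofReal_step_u m ε hint hε hno u hu0 (r+1) y hv,
              h3 (r+1) (by omega) (by omega) y hv]
        rw [e1, e2, if_neg hB, if_neg hB, mul_zero, zero_add, ← ENNReal.tsum_mul_left,
          ← ENNReal.tsum_add]
        have hle : ∀ hv : H,
            (ENNReal.ofReal lam * if lam ≤ uh (r + 1) y hv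
              then P * ENNReal.ofReal (Dfun m ε hint (r+1) y hv) else 0)
            + (if lam ≤ uh (r + 1) y hv then 0
              else P * ENNReal.ofReal (Dfun m ε hint (r+1) y hv * uh (r+1) y hv))
            ≤ P * ENNReal.ofReal (Dfun m ε hint (r+1) y hv * uh (r+1) y hv) := by
          intro hv
          by_cases hbb : lam ≤ uh (r + 1) y hv
          · rw [if_pos hbb, if_pos hbb, add_zero,
              ENNReal.ofReal_mul (Dfun_nonneg m ε hint hε hno (r+1) y hv)]
            calc ENNReal.ofReal lam * (P * ENNReal.ofReal (Dfun m ε hint (r+1) y hv))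
                = P * ENNReal.ofReal (Dfun m ε hint (r+1) y hv) * ENNReal.ofReal lam := by
                  ring
              _ ≤ P * ENNReal.ofReal (Dfun m ε hint (r+1) y hv)
                  * ENNReal.ofReal (uh (r+1) y hv) :=
                  mul_le_mul_right (ENNReal.ofReal_le_ofReal hbb) _
              _ = P * (ENNReal.ofReal (Dfun m ε hint (r+1) y hv)
                  * ENNReal.ofReal (uh (r+1) y hv)) := by ring
          · rw [if_neg hbb, if_neg hbb, mul_zero, zero_add]
        refine le_trans (ENNReal.tsum_le_tsum hle) ?_
        rw [ENNReal.tsum_mul_left,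
          ← ENNReal.ofReal_tsum_of_nonneg
            (fun hv => mul_nonneg (Dfun_nonneg m ε hint hε hno (r+1) y hv)
              (huh0 (r+1) y hv)) (hDuh (r+1) y),
          h2 (r+1) (by omega) (by omega) y]

end doob

section assemble
variable {H : Type} (m : ℕ) (ε : ℝ) (k0 : ℤ) (hint : ℕ → ℤ → H → ℝ)

lemma trajProb_nonneg (hε : ε ∈ Set.Icc (-1:ℝ) 1) (hno : ∀ r y hv, 0 ≤ hint r y hv)
    (x : Fin m → ℤ) (h : Fin m → H) : 0 ≤ trajProb m ε k0 hint x h :=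
  Finset.prod_nonneg fun i _ => mul_nonneg (binPMF_nonneg hε _ _) (hno _ _ _)

lemma ePP_eq_trajProb (hε : ε ∈ Set.Icc (-1:ℝ) 1) (hno : ∀ r y hv, 0 ≤ hint r y hv)
    (x : Fin m → ℤ) (h : Fin m → H) :
    ePP m ε k0 hint x h = ENNReal.ofReal (trajProb m ε k0 hint x h) := by
  unfold ePP trajProb
  rw [ENNReal.ofReal_prod_of_nonneg
    (fun i _ => mul_nonneg (binPMF_nonneg hε _ _) (hno _ _ _))]
  refine Finset.prod_congr rfl fun i _ => ?_
  rw [ENNReal.ofReal_mul (binPMF_nonneg hε _ _)]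
  rfl

lemma sRound_succ (rr : ℕ) (hrm : rr ≤ m) :
    sRound m rr = lRound m rr + sRound m (rr+1) := by
  unfold sRound
  rw [show Icc rr m = insert rr (Icc (rr+1) m) from by
      ext a; simp only [mem_Icc, mem_insert]; omega,
    Finset.sum_insert (by simp only [mem_Icc]; omega)]

noncomputable def Nfun (rr : ℕ) (y : ℤ) (hv : H) : ℝ :=
  ∑ z ∈ Icc (-(lRound m rr : ℤ)) (lRound m rr : ℤ),
    binPMF (lRound m rr) ε z * hint rr (y + z) hv
      * binTail (sRound m (rr+1)) ε (-(y + z))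

lemma roundO_eq (rr : ℕ) (y : ℤ) (hv : H) :
    roundO m ε hint rr y hv = Nfun m ε hint rr y hv / Dfun m ε hint rr y hv := rfl

lemma Nfun_nonneg (hε : ε ∈ Set.Icc (-1:ℝ) 1) (hno : ∀ r y hv, 0 ≤ hint r y hv)
    (rr : ℕ) (y : ℤ) (hv : H) : 0 ≤ Nfun m ε hint rr y hv :=
  Finset.sum_nonneg fun z _ => mul_nonneg
    (mul_nonneg (binPMF_nonneg hε _ _) (hno _ _ _)) (binTail_nonneg hε _ _)

lemma Nfun_le_Dfun (hε : ε ∈ Set.Icc (-1:ℝ) 1) (hno : ∀ r y hv, 0 ≤ hint r y hv)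
    (rr : ℕ) (y : ℤ) (hv : H) : Nfun m ε hint rr y hv ≤ Dfun m ε hint rr y hv := by
  refine Finset.sum_le_sum fun z _ => ?_
  calc binPMF (lRound m rr) ε z * hint rr (y + z) hv * binTail (sRound m (rr+1)) ε (-(y + z))
      ≤ binPMF (lRound m rr) ε z * hint rr (y + z) hv * 1 :=
        mul_le_mul_of_nonneg_left (binTail_le_one hε _ _)
          (mul_nonneg (binPMF_nonneg hε _ _) (hno _ _ _))
    _ = binPMF (lRound m rr) ε z * hint rr (y + z) hv := mul_one _

lemma roundO_nonneg (hε : ε ∈ Set.Icc (-1:ℝ) 1) (hno : ∀ r y hv, 0 ≤ hint r y hv)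
    (rr : ℕ) (y : ℤ) (hv : H) : 0 ≤ roundO m ε hint rr y hv :=
  div_nonneg (Nfun_nonneg m ε hint hε hno rr y hv) (Dfun_nonneg m ε hint hε hno rr y hv)

lemma roundO_le_one (hε : ε ∈ Set.Icc (-1:ℝ) 1) (hno : ∀ r y hv, 0 ≤ hint r y hv)
    (rr : ℕ) (y : ℤ) (hv : H) : roundO m ε hint rr y hv ≤ 1 :=
  div_le_one_of_le₀ (Nfun_le_Dfun m ε hint hε hno rr y hv)
    (Dfun_nonneg m ε hint hε hno rr y hv)

lemma Nfun_eq (hε : ε ∈ Set.Icc (-1:ℝ) 1) (hno : ∀ r y hv, 0 ≤ hint r y hv)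
    (rr : ℕ) (y : ℤ) (hv : H) :
    Nfun m ε hint rr y hv = Dfun m ε hint rr y hv * roundO m ε hint rr y hv := by
  by_cases hD : Dfun m ε hint rr y hv = 0
  · rw [hD, zero_mul]
    exact le_antisymm (by rw [← hD]; exact Nfun_le_Dfun m ε hint hε hno rr y hv)
      (Nfun_nonneg m ε hint hε hno rr y hv)
  · rw [roundO_eq, mul_comm, div_mul_cancel₀ _ hD]

lemma roundOminus_nonneg (hε : ε ∈ Set.Icc (-1:ℝ) 1) (rr : ℕ) (y : ℤ) :
    0 ≤ roundOminus m ε rr y := binTail_nonneg hε _ _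

lemma roundOminus_le_one (hε : ε ∈ Set.Icc (-1:ℝ) 1) (rr : ℕ) (y : ℤ) :
    roundOminus m ε rr y ≤ 1 := binTail_le_one hε _ _

lemma Nfun_summable (hε : ε ∈ Set.Icc (-1:ℝ) 1)
    (hsum : ∀ r y, ∑' hv : H, hint r y hv = 1) (rr : ℕ) (y : ℤ) :
    Summable (fun hv => Nfun m ε hint rr y hv) :=
  summable_sum fun z _ => by
    have := ((hint_summable hint hsum rr (y+z)).mul_left
      (binPMF (lRound m rr) ε z)).mul_right (binTail (sRound m (rr+1)) ε (-(y + z)))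
    exact this

lemma tsum_Nfun (hε : ε ∈ Set.Icc (-1:ℝ) 1) (hno : ∀ r y hv, 0 ≤ hint r y hv)
    (hsum : ∀ r y, ∑' hv : H, hint r y hv = 1) (rr : ℕ) (hrm : rr ≤ m) (y : ℤ) :
    ∑' hv : H, Nfun m ε hint rr y hv = binTail (sRound m rr) ε (-y) := by
  unfold Nfun
  rw [Summable.tsum_finsetSum fun z _ => by
    exact ((hint_summable hint hsum rr (y+z)).mul_left
      (binPMF (lRound m rr) ε z)).mul_right (binTail (sRound m (rr+1)) ε (-(y + z)))]
  have hz : ∀ z ∈ Icc (-(lRound m rr : ℤ)) (lRound m rr : ℤ),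
      ∑' hv : H, binPMF (lRound m rr) ε z * hint rr (y + z) hv
        * binTail (sRound m (rr+1)) ε (-(y + z))
      = binPMF (lRound m rr) ε z * binTail (sRound m (rr+1)) ε ((-y) - z) := by
    intro z _
    have : ∀ hv : H, binPMF (lRound m rr) ε z * hint rr (y + z) hv
        * binTail (sRound m (rr+1)) ε (-(y + z))
        = (binPMF (lRound m rr) ε z * binTail (sRound m (rr+1)) ε ((-y) - z))
          * hint rr (y + z) hv := fun hv => by
      rw [show (-y) - z = -(y+z) from by ring]; ring
    rw [tsum_congr this, tsum_mul_left, hsum rr (y+z), mul_one]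
  rw [Finset.sum_congr rfl hz, sRound_succ m rr hrm, binTail_conv]

lemma DO_summable (hε : ε ∈ Set.Icc (-1:ℝ) 1) (hno : ∀ r y hv, 0 ≤ hint r y hv)
    (hsum : ∀ r y, ∑' hv : H, hint r y hv = 1) (rr : ℕ) (y : ℤ) :
    Summable (fun hv => Dfun m ε hint rr y hv * roundO m ε hint rr y hv) := by
  refine Summable.of_nonneg_of_le
    (fun hv => mul_nonneg (Dfun_nonneg m ε hint hε hno rr y hv)
      (roundO_nonneg m ε hint hε hno rr y hv))
    (fun hv => ?_) (Dfun_summable m ε hint hsum rr y)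
  calc Dfun m ε hint rr y hv * roundO m ε hint rr y hv
      ≤ Dfun m ε hint rr y hv * 1 :=
        mul_le_mul_of_nonneg_left (roundO_le_one m ε hint hε hno rr y hv)
          (Dfun_nonneg m ε hint hε hno rr y hv)
    _ = Dfun m ε hint rr y hv := mul_one _

end assemble

section mainbound
variable {H : Type} (m : ℕ) (ε : ℝ) (k0 : ℤ) (hint : ℕ → ℤ → H → ℝ)

lemma main_bound (hε : ε ∈ Set.Icc (-1:ℝ) 1) (hno : ∀ r y hv, 0 ≤ hint r y hv)
    (hsum : ∀ r y, ∑' hv : H, hint r y hv = 1)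
    (u : ℕ → ℤ → ℝ) (uh : ℕ → ℤ → H → ℝ)
    (hu0 : ∀ r y, 0 ≤ u r y) (hu1 : ∀ r y, u r y ≤ 1)
    (huh0 : ∀ r y hv, 0 ≤ uh r y hv) (huh1 : ∀ r y hv, uh r y hv ≤ 1)
    (hDuh : ∀ rr y, Summable (fun hv => Dfun m ε hint rr y hv * uh rr y hv))
    (h2 : ∀ rr, 1 ≤ rr → rr ≤ m → ∀ y,
      ∑' hv : H, Dfun m ε hint rr y hv * uh rr y hv = u rr y)
    (h3 : ∀ rr, 1 ≤ rr → rr ≤ m → ∀ y hv,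
      ∑ z ∈ Icc (-(lRound m rr : ℤ)) (lRound m rr : ℤ),
        binPMF (lRound m rr) ε z * hint rr (y + z) hv * u (rr+1) (y+z)
        = Dfun m ε hint rr y hv * uh rr y hv)
    (lam : ℝ) (hlam : 0 < lam)
    (g : (Fin m → ℤ) → (Fin m → H) → ℝ)
    (hg : ∀ x h, g x h = 0 ∨ ∃ j : Fin m,
      |g x h| = |uh ((j:ℕ)+1) (Ypre k0 x (j:ℕ)) (h j) - u ((j:ℕ)+1) (Ypre k0 x (j:ℕ))|) :
    ∑' xh : (Fin m → ℤ) × (Fin m → H),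
      ENNReal.ofReal (trajProb m ε k0 hint xh.1 xh.2 * |g xh.1 xh.2|)
      ≤ ENNReal.ofReal lam
        + ENNReal.ofReal (u 1 k0) / ENNReal.ofReal lam := by
  have hpt : ∀ xh : (Fin m → ℤ) × (Fin m → H),
      ENNReal.ofReal (trajProb m ε k0 hint xh.1 xh.2 * |g xh.1 xh.2|)
      ≤ ENNReal.ofReal lam * ePP m ε k0 hint xh.1 xh.2
        + (if BadP k0 u uh lam xh.1 xh.2 then ePP m ε k0 hint xh.1 xh.2 else 0) := by
    intro xh
    have hPnn := trajProb_nonneg m ε k0 hint hε hno xh.1 xh.2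
    have hPe := ePP_eq_trajProb m ε k0 hint hε hno xh.1 xh.2
    rcases hg xh.1 xh.2 with hg0 | ⟨j, hj⟩
    · rw [hg0, abs_zero, mul_zero, ENNReal.ofReal_zero]
      exact zero_le
    · by_cases hB : BadP k0 u uh lam xh.1 xh.2
      · refine le_trans ?_ (le_add_self)
        rw [if_pos hB, hPe]
        refine ENNReal.ofReal_le_ofReal ?_
        calc trajProb m ε k0 hint xh.1 xh.2 * |g xh.1 xh.2|
            ≤ trajProb m ε k0 hint xh.1 xh.2 * 1 := by
              refine mul_le_mul_of_nonneg_left ?_ hPnn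
              rw [hj]
              have h1 := huh0 ((j:ℕ)+1) (Ypre k0 xh.1 (j:ℕ)) (xh.2 j)
              have h2' := huh1 ((j:ℕ)+1) (Ypre k0 xh.1 (j:ℕ)) (xh.2 j)
              have h3' := hu0 ((j:ℕ)+1) (Ypre k0 xh.1 (j:ℕ))
              have h4 := hu1 ((j:ℕ)+1) (Ypre k0 xh.1 (j:ℕ))
              rw [abs_le]
              constructor <;> linarith
          _ = trajProb m ε k0 hint xh.1 xh.2 := mul_one _
      · refine le_trans ?_ (le_add_right le_rfl)
        rw [hPe, ← ENNReal.ofReal_mul (le_of_lt hlam)]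
        refine ENNReal.ofReal_le_ofReal ?_
        have hnb : ¬ (lam ≤ u ((j:ℕ)+1) (Ypre k0 xh.1 (j:ℕ)) ∨
            lam ≤ uh ((j:ℕ)+1) (Ypre k0 xh.1 (j:ℕ)) (xh.2 j)) := fun hc => hB ⟨j, hc⟩
        push_neg at hnb
        calc trajProb m ε k0 hint xh.1 xh.2 * |g xh.1 xh.2|
            ≤ trajProb m ε k0 hint xh.1 xh.2 * lam := by
              refine mul_le_mul_of_nonneg_left ?_ hPnn
              rw [hj]
              have h1 := huh0 ((j:ℕ)+1) (Ypre k0 xh.1 (j:ℕ)) (xh.2 j)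
              have h3' := hu0 ((j:ℕ)+1) (Ypre k0 xh.1 (j:ℕ))
              rw [abs_le]
              constructor <;> [linarith [hnb.1, hnb.2]; linarith [hnb.1, hnb.2]]
          _ = lam * trajProb m ε k0 hint xh.1 xh.2 := mul_comm _ _
  refine le_trans (ENNReal.tsum_le_tsum hpt) ?_
  rw [ENNReal.tsum_add, ENNReal.tsum_mul_left, mass m ε k0 hint hε hno hsum m, mul_one]
  refine add_le_add le_rfl ?_
  -- Doob bound on the bad mass
  have hd := doob m ε k0 hint hε hno hsum u uh hu0 huh0 hDuh h2 h3 lam m le_rfl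
  have hlam' : ENNReal.ofReal lam ≠ 0 := by
    simp [ENNReal.ofReal_eq_zero]; linarith
  rw [ENNReal.le_div_iff_mul_le (Or.inl hlam') (Or.inl ENNReal.ofReal_ne_top)]
  calc (∑' xh : (Fin m → ℤ) × (Fin m → H),
        if BadP k0 u uh lam xh.1 xh.2 then ePP m ε k0 hint xh.1 xh.2 else 0)
        * ENNReal.ofReal lam
      = ENNReal.ofReal lam * (∑' xh : (Fin m → ℤ) × (Fin m → H),
        if BadP k0 u uh lam xh.1 xh.2 then ePP m ε k0 hint xh.1 xh.2 else 0) := mul_comm _ _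
    _ ≤ ENNReal.ofReal (u 1 k0) := le_trans (le_add_right le_rfl) hd

end mainbound

section final
variable {H : Type} (m : ℕ) (ε : ℝ) (k0 : ℤ) (hint : ℕ → ℤ → H → ℝ)
  (b : ℕ → ℤ → H → Bool)

lemma trajGain_none (x : Fin m → ℤ) (h : Fin m → H)
    (hst : stopIdx m k0 b x h = none) : trajGain m ε k0 hint b x h = 0 := by
  unfold trajGain
  rw [hst]

lemma trajGain_some (x : Fin m → ℤ) (h : Fin m → H) (i : Fin m)
    (hst : stopIdx m k0 b x h = some i) :
    trajGain m ε k0 hint b x h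
      = roundO m ε hint ((i : ℕ) + 1) (partY m k0 x (i : ℕ)) (h i)
        - roundOminus m ε ((i : ℕ) + 1) (partY m k0 x (i : ℕ)) := by
  unfold trajGain
  rw [hst]

lemma trajGain_abs_le_one (hε : ε ∈ Set.Icc (-1:ℝ) 1)
    (hno : ∀ r y hv, 0 ≤ hint r y hv) (x : Fin m → ℤ) (h : Fin m → H) :
    |trajGain m ε k0 hint b x h| ≤ 1 := by
  rcases hst : stopIdx m k0 b x h with _ | i
  · rw [trajGain_none m ε k0 hint b x h hst]; simp
  · rw [trajGain_some m ε k0 hint b x h i hst, abs_le]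
    have h1 := roundO_nonneg m ε hint hε hno ((i:ℕ)+1) (partY m k0 x (i:ℕ)) (h i)
    have h2 := roundO_le_one m ε hint hε hno ((i:ℕ)+1) (partY m k0 x (i:ℕ)) (h i)
    have h3 := roundOminus_nonneg m ε hε ((i:ℕ)+1) (partY m k0 x (i:ℕ))
    have h4 := roundOminus_le_one m ε hε ((i:ℕ)+1) (partY m k0 x (i:ℕ))
    constructor <;> linarith

set_option maxHeartbeats 1000000 in
lemma total_mass (hε : ε ∈ Set.Icc (-1:ℝ) 1) (hno : ∀ r y hv, 0 ≤ hint r y hv)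
    (hsum : ∀ r y, ∑' hv : H, hint r y hv = 1) :
    ∑' xh : (Fin m → ℤ) × (Fin m → H),
      ENNReal.ofReal (trajProb m ε k0 hint xh.1 xh.2) = 1 := by
  have hm := mass m ε k0 hint hε hno hsum m
  have hfe : (fun xh : (Fin m → ℤ) × (Fin m → H) => ePP m ε k0 hint xh.1 xh.2)
      = (fun xh : (Fin m → ℤ) × (Fin m → H) =>
          ENNReal.ofReal (trajProb m ε k0 hint xh.1 xh.2)) :=
    funext fun xh => ePP_eq_trajProb m ε k0 hint hε hno xh.1 xh.2
  rw [hfe] at hm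
  exact hm

lemma trajProb_summable (hε : ε ∈ Set.Icc (-1:ℝ) 1) (hno : ∀ r y hv, 0 ≤ hint r y hv)
    (hsum : ∀ r y, ∑' hv : H, hint r y hv = 1) :
    Summable (fun xh : (Fin m → ℤ) × (Fin m → H) => trajProb m ε k0 hint xh.1 xh.2) := by
  have := ENNReal.summable_toReal (f := fun xh : (Fin m → ℤ) × (Fin m → H) =>
    ENNReal.ofReal (trajProb m ε k0 hint xh.1 xh.2))
    (by rw [total_mass m ε k0 hint hε hno hsum]; exact ENNReal.one_ne_top)
  refine this.congr fun xh => ?_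
  exact ENNReal.toReal_ofReal (trajProb_nonneg m ε k0 hint hε hno xh.1 xh.2)

end final

section cases12
variable {H : Type} (m : ℕ) (ε : ℝ) (k0 : ℤ) (hint : ℕ → ℤ → H → ℝ)

lemma case1_h2 (hε : ε ∈ Set.Icc (-1:ℝ) 1) (hno : ∀ r y hv, 0 ≤ hint r y hv)
    (hsum : ∀ r y, ∑' hv : H, hint r y hv = 1) (rr : ℕ) (h1 : 1 ≤ rr) (hrm : rr ≤ m)
    (y : ℤ) : ∑' hv : H, Dfun m ε hint rr y hv * roundO m ε hint rr y hv
      = roundOminus m ε rr y := by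
  rw [tsum_congr fun hv => (Nfun_eq m ε hint hε hno rr y hv).symm]
  exact tsum_Nfun m ε hint hε hno hsum rr hrm y

lemma case1_h3 (hε : ε ∈ Set.Icc (-1:ℝ) 1) (hno : ∀ r y hv, 0 ≤ hint r y hv)
    (rr : ℕ) (y : ℤ) (hv : H) :
    ∑ z ∈ Icc (-(lRound m rr : ℤ)) (lRound m rr : ℤ),
      binPMF (lRound m rr) ε z * hint rr (y + z) hv * roundOminus m ε (rr+1) (y+z)
      = Dfun m ε hint rr y hv * roundO m ε hint rr y hv := by
  rw [← Nfun_eq m ε hint hε hno rr y hv]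
  rfl

lemma case2_h2 (hε : ε ∈ Set.Icc (-1:ℝ) 1) (hno : ∀ r y hv, 0 ≤ hint r y hv)
    (hsum : ∀ r y, ∑' hv : H, hint r y hv = 1) (rr : ℕ) (h1 : 1 ≤ rr) (hrm : rr ≤ m)
    (y : ℤ) : ∑' hv : H, Dfun m ε hint rr y hv * (1 - roundO m ε hint rr y hv)
      = 1 - roundOminus m ε rr y := by
  have hpt : ∀ hv : H, Dfun m ε hint rr y hv * (1 - roundO m ε hint rr y hv)
      = Dfun m ε hint rr y hv - Dfun m ε hint rr y hv * roundO m ε hint rr y hv :=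
    fun hv => by ring
  rw [tsum_congr hpt,
    Summable.tsum_sub (Dfun_summable m ε hint hsum rr y) (DO_summable m ε hint hε hno hsum rr y),
    tsum_Dfun m ε hint hsum rr y, case1_h2 m ε hint hε hno hsum rr h1 hrm y]

lemma case2_h3 (hε : ε ∈ Set.Icc (-1:ℝ) 1) (hno : ∀ r y hv, 0 ≤ hint r y hv)
    (rr : ℕ) (y : ℤ) (hv : H) :
    ∑ z ∈ Icc (-(lRound m rr : ℤ)) (lRound m rr : ℤ),
      binPMF (lRound m rr) ε z * hint rr (y + z) hv
        * (1 - roundOminus m ε (rr+1) (y+z))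
      = Dfun m ε hint rr y hv * (1 - roundO m ε hint rr y hv) := by
  have hpt : ∀ z : ℤ, binPMF (lRound m rr) ε z * hint rr (y + z) hv
      * (1 - roundOminus m ε (rr+1) (y+z))
      = binPMF (lRound m rr) ε z * hint rr (y + z) hv
        - binPMF (lRound m rr) ε z * hint rr (y + z) hv
          * roundOminus m ε (rr+1) (y+z) := fun z => by ring
  rw [Finset.sum_congr rfl fun z _ => hpt z, Finset.sum_sub_distrib,
    case1_h3 m ε hint hε hno rr y hv]
  have : (∑ z ∈ Icc (-(lRound m rr : ℤ)) (lRound m rr : ℤ),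
      binPMF (lRound m rr) ε z * hint rr (y + z) hv) = Dfun m ε hint rr y hv := rfl
  rw [this]
  ring

end cases12

section conclude
variable {H : Type} (m : ℕ) (ε : ℝ) (k0 : ℤ) (hint : ℕ → ℤ → H → ℝ)
  (b : ℕ → ℤ → H → Bool)

lemma conclude (hm : 1 ≤ m) (hε : ε ∈ Set.Icc (-1:ℝ) 1)
    (hno : ∀ r y hv, 0 ≤ hint r y hv)
    (hsum : ∀ r y, ∑' hv : H, hint r y hv = 1)
    (u : ℕ → ℤ → ℝ) (uh : ℕ → ℤ → H → ℝ)
    (hu0 : ∀ r y, 0 ≤ u r y) (hu1 : ∀ r y, u r y ≤ 1)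
    (huh0 : ∀ r y hv, 0 ≤ uh r y hv) (huh1 : ∀ r y hv, uh r y hv ≤ 1)
    (hDuh : ∀ rr y, Summable (fun hv => Dfun m ε hint rr y hv * uh rr y hv))
    (h2 : ∀ rr, 1 ≤ rr → rr ≤ m → ∀ y,
      ∑' hv : H, Dfun m ε hint rr y hv * uh rr y hv = u rr y)
    (h3 : ∀ rr, 1 ≤ rr → rr ≤ m → ∀ y hv,
      ∑ z ∈ Icc (-(lRound m rr : ℤ)) (lRound m rr : ℤ),
        binPMF (lRound m rr) ε z * hint rr (y + z) hv * u (rr+1) (y+z)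
        = Dfun m ε hint rr y hv * uh rr y hv)
    (hu1k0 : u 1 k0 < 1/(m:ℝ)^2)
    (hg : ∀ x h, trajGain m ε k0 hint b x h = 0 ∨ ∃ j : Fin m,
      |trajGain m ε k0 hint b x h|
        = |uh ((j:ℕ)+1) (Ypre k0 x (j:ℕ)) (h j) - u ((j:ℕ)+1) (Ypre k0 x (j:ℕ))|) :
    gameBias m ε k0 hint b ≤ 2 / m := by
  have hm0 : (0:ℝ) < m := by exact_mod_cast Nat.lt_of_lt_of_le Nat.zero_lt_one hm
  have hlam : (0:ℝ) < 1/(m:ℝ) := by positivity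
  have hmain := main_bound m ε k0 hint hε hno hsum u uh hu0 hu1 huh0 huh1 hDuh h2 h3
    (1/(m:ℝ)) hlam (trajGain m ε k0 hint b) hg
  -- bound the ENNReal RHS by ofReal (2/m)
  have hA : ENNReal.ofReal (1/(m:ℝ))
      + ENNReal.ofReal (u 1 k0) / ENNReal.ofReal (1/(m:ℝ))
      ≤ ENNReal.ofReal (2/(m:ℝ)) := by
    have hd1 : ENNReal.ofReal (u 1 k0) / ENNReal.ofReal (1/(m:ℝ))
        ≤ ENNReal.ofReal (1/(m:ℝ)^2) / ENNReal.ofReal (1/(m:ℝ)) :=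
      ENNReal.div_le_div_right (ENNReal.ofReal_le_ofReal (le_of_lt hu1k0)) _
    have hd2 : ENNReal.ofReal (1/(m:ℝ)^2) / ENNReal.ofReal (1/(m:ℝ))
        = ENNReal.ofReal (1/(m:ℝ)) := by
      rw [← ENNReal.ofReal_div_of_pos hlam]
      congr 1
      field_simp
    calc ENNReal.ofReal (1/(m:ℝ))
        + ENNReal.ofReal (u 1 k0) / ENNReal.ofReal (1/(m:ℝ))
        ≤ ENNReal.ofReal (1/(m:ℝ)) + ENNReal.ofReal (1/(m:ℝ)) := by
          refine add_le_add le_rfl (le_trans hd1 (le_of_eq hd2))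
      _ = ENNReal.ofReal (2/(m:ℝ)) := by
          rw [← ENNReal.ofReal_add (le_of_lt hlam) (le_of_lt hlam)]
          congr 1
          ring
  have hS := le_trans hmain hA
  -- summability facts
  have hPs := trajProb_summable m ε k0 hint hε hno hsum
  have habs : ∀ xh : (Fin m → ℤ) × (Fin m → H),
      |trajProb m ε k0 hint xh.1 xh.2 * trajGain m ε k0 hint b xh.1 xh.2|
        = trajProb m ε k0 hint xh.1 xh.2 * |trajGain m ε k0 hint b xh.1 xh.2| :=
    fun xh => by
      rw [abs_mul, abs_of_nonneg (trajProb_nonneg m ε k0 hint hε hno xh.1 xh.2)]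
  have hfabs : Summable (fun xh : (Fin m → ℤ) × (Fin m → H) =>
      |trajProb m ε k0 hint xh.1 xh.2 * trajGain m ε k0 hint b xh.1 xh.2|) := by
    refine Summable.of_nonneg_of_le (fun _ => abs_nonneg _) (fun xh => ?_) hPs
    rw [habs xh]
    calc trajProb m ε k0 hint xh.1 xh.2 * |trajGain m ε k0 hint b xh.1 xh.2|
        ≤ trajProb m ε k0 hint xh.1 xh.2 * 1 :=
          mul_le_mul_of_nonneg_left
            (trajGain_abs_le_one m ε k0 hint b hε hno xh.1 xh.2)
            (trajProb_nonneg m ε k0 hint hε hno xh.1 xh.2)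
      _ = trajProb m ε k0 hint xh.1 xh.2 := mul_one _
  unfold gameBias
  calc |∑' q : (Fin m → ℤ) × (Fin m → H),
        trajProb m ε k0 hint q.1 q.2 * trajGain m ε k0 hint b q.1 q.2|
      ≤ ∑' q : (Fin m → ℤ) × (Fin m → H),
        |trajProb m ε k0 hint q.1 q.2 * trajGain m ε k0 hint b q.1 q.2| := by
        have := norm_tsum_le_tsum_norm (f := fun q : (Fin m → ℤ) × (Fin m → H) =>
          trajProb m ε k0 hint q.1 q.2 * trajGain m ε k0 hint b q.1 q.2)
          (by simp only [Real.norm_eq_abs]; exact hfabs)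
        simp only [Real.norm_eq_abs] at this
        exact this
    _ = ∑' q : (Fin m → ℤ) × (Fin m → H),
        (ENNReal.ofReal (trajProb m ε k0 hint q.1 q.2
          * |trajGain m ε k0 hint b q.1 q.2|)).toReal := by
        refine tsum_congr fun q => ?_
        rw [ENNReal.toReal_ofReal (mul_nonneg
          (trajProb_nonneg m ε k0 hint hε hno q.1 q.2) (abs_nonneg _)), habs q]
    _ = (∑' q : (Fin m → ℤ) × (Fin m → H),
        ENNReal.ofReal (trajProb m ε k0 hint q.1 q.2
          * |trajGain m ε k0 hint b q.1 q.2|)).toReal :=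
        (ENNReal.tsum_toReal_eq fun q => ENNReal.ofReal_ne_top).symm
    _ ≤ (ENNReal.ofReal (2/(m:ℝ))).toReal :=
        ENNReal.toReal_mono ENNReal.ofReal_ne_top hS
    _ = 2/(m:ℝ) := ENNReal.toReal_ofReal (by positivity)

end conclude


theorem stmt_19 (m : ℕ) (hm : 1 ≤ m) (ε : ℝ) (hε : ε ∈ Set.Icc (-1 : ℝ) 1) (k0 : ℤ)
    (H : Type) [Countable H] (hint : ℕ → ℤ → H → ℝ)
    (hint_nonneg : ∀ r y hv, 0 ≤ hint r y hv)
    (hint_sum : ∀ r y, ∑' hv : H, hint r y hv = 1)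
    (hdet : binTail (sRound m 1) ε (-k0) < 1 / (m : ℝ) ^ 2 ∨
      1 - 1 / (m : ℝ) ^ 2 < binTail (sRound m 1) ε (-k0))
    (b : ℕ → ℤ → H → Bool) :
    gameBias m ε k0 hint b ≤ 2 / m := by
  
  rcases hdet with hdet | hdet
  · -- small case: u = O⁻, uh = O
    refine conclude m ε k0 hint b hm hε hint_nonneg hint_sum
      (fun r y => roundOminus m ε r y) (fun r y hv => roundO m ε hint r y hv)
      (fun r y => roundOminus_nonneg m ε hε r y)
      (fun r y => roundOminus_le_one m ε hε r y)
      (fun r y hv => roundO_nonneg m ε hint hε hint_nonneg r y hv)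
      (fun r y hv => roundO_le_one m ε hint hε hint_nonneg r y hv)
      (fun rr y => DO_summable m ε hint hε hint_nonneg hint_sum rr y)
      (fun rr h1 hrm y => case1_h2 m ε hint hε hint_nonneg hint_sum rr h1 hrm y)
      (fun rr h1 hrm y hv => case1_h3 m ε hint hε hint_nonneg rr y hv)
      hdet ?_
    intro x h
    rcases hst : stopIdx m k0 b x h with _ | i
    · exact Or.inl (trajGain_none m ε k0 hint b x h hst)
    · refine Or.inr ⟨i, ?_⟩
      show |trajGain m ε k0 hint b x h|
        = |roundO m ε hint ((i:ℕ)+1) (partY m k0 x (i:ℕ)) (h i)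
            - roundOminus m ε ((i:ℕ)+1) (partY m k0 x (i:ℕ))|
      rw [trajGain_some m ε k0 hint b x h i hst]
  · -- large case: u = 1 - O⁻, uh = 1 - O
    refine conclude m ε k0 hint b hm hε hint_nonneg hint_sum
      (fun r y => 1 - roundOminus m ε r y) (fun r y hv => 1 - roundO m ε hint r y hv)
      (fun r y => by
        show (0:ℝ) ≤ 1 - roundOminus m ε r y
        linarith [roundOminus_le_one m ε hε r y])
      (fun r y => by
        show 1 - roundOminus m ε r y ≤ 1
        linarith [roundOminus_nonneg m ε hε r y])
      (fun r y hv => by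
        show (0:ℝ) ≤ 1 - roundO m ε hint r y hv
        linarith [roundO_le_one m ε hint hε hint_nonneg r y hv])
      (fun r y hv => by
        show 1 - roundO m ε hint r y hv ≤ 1
        linarith [roundO_nonneg m ε hint hε hint_nonneg r y hv])
      (fun rr y => ((Dfun_summable m ε hint hint_sum rr y).sub
        (DO_summable m ε hint hε hint_nonneg hint_sum rr y)).congr
        (fun hv => by ring))
      (fun rr h1 hrm y => case2_h2 m ε hint hε hint_nonneg hint_sum rr h1 hrm y)
      (fun rr h1 hrm y hv => case2_h3 m ε hint hε hint_nonneg rr y hv)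
      (by
        show 1 - roundOminus m ε 1 k0 < 1/(m:ℝ)^2
        have hre : roundOminus m ε 1 k0 = binTail (sRound m 1) ε (-k0) := rfl
        linarith [hre]) ?_
    intro x h
    rcases hst : stopIdx m k0 b x h with _ | i
    · exact Or.inl (trajGain_none m ε k0 hint b x h hst)
    · refine Or.inr ⟨i, ?_⟩
      show |trajGain m ε k0 hint b x h|
        = |(1 - roundO m ε hint ((i:ℕ)+1) (partY m k0 x (i:ℕ)) (h i))
            - (1 - roundOminus m ε ((i:ℕ)+1) (partY m k0 x (i:ℕ)))|
      rw [trajGain_some m ε k0 hint b x h i hst,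
        show (1 - roundO m ε hint ((i:ℕ)+1) (partY m k0 x (i:ℕ)) (h i))
            - (1 - roundOminus m ε ((i:ℕ)+1) (partY m k0 x (i:ℕ)))
          = -(roundO m ε hint ((i:ℕ)+1) (partY m k0 x (i:ℕ)) (h i)
            - roundOminus m ε ((i:ℕ)+1) (partY m k0 x (i:ℕ))) from by ring, abs_neg]
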